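/- There exist arbitrarily large finite groups G together with an element g ∈ G such that no finite group of order smaller than |G|² can contain G together with a square root of g. Precisely: for every natural number N there exist a finite group G with N ≤ Nat.card G and an element g : G such that for every finite group H and every injective group homomorphism f : G →* H, if there exists x : H with x^2 = f g, then (Nat.card G)^2 ≤ Nat.card H. -/

import Mathlib

section PrimePart

/-- Every natural ≡ 3 mod 4 has a prime factor ≡ 3 mod 4. -/
lemma exists_prime_fac_three_mod_four : ∀ M : ℕ, M % 4 = 3 →
    ∃ q : ℕ, q.Prime ∧ q % 4 = 3 ∧ q ∣ M := by
  intro M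
  induction M using Nat.strong_induction_on with
  | _ M ih =>
    intro hM
    have hM1 : M ≠ 1 := by omega
    obtain ⟨q, hq, hqd⟩ := Nat.exists_prime_and_dvd hM1
    by_cases h3 : q % 4 = 3
    · exact ⟨q, hq, h3, hqd⟩
    · obtain ⟨c, rfl⟩ := hqd
      have hqodd : q % 2 = 1 := by
        rcases hq.eq_two_or_odd with h | h
        · subst h; omega
        · exact h
      have hq1 : q % 4 = 1 := by omega
      have hc4 : c % 4 = 3 := by
        have := Nat.mul_mod q c 4
        rw [hq1] at this
        omega
      have hc0 : 0 < c := by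
        rcases Nat.eq_zero_or_pos c with h | h
        · subst h; omega
        · exact h
      have hclt : c < q * c := by
        have h2 := hq.two_le
        calc c = 1 * c := (one_mul c).symm
        _ < q * c := (Nat.mul_lt_mul_right hc0).mpr (by omega)
      obtain ⟨r, hr, hr3, hrd⟩ := ih c hclt hc4
      exact ⟨r, hr, hr3, hrd.mul_left q⟩

lemma exists_large_prime_three_mod_four (N : ℕ) :
    ∃ p : ℕ, p.Prime ∧ p % 4 = 3 ∧ N ≤ p := by
  have hfac : 0 < (Nat.factorial N) := Nat.factorial_pos N
  have hM : (4 * (Nat.factorial N) - 1) % 4 = 3 := by omega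
  obtain ⟨q, hq, hq3, hqd⟩ := exists_prime_fac_three_mod_four _ hM
  refine ⟨q, hq, hq3, ?_⟩
  by_contra hlt
  push_neg at hlt
  have hqN : q ≤ N := by omega
  have h1 : q ∣ 4 * (Nat.factorial N) := Dvd.dvd.mul_left (Nat.dvd_factorial hq.pos hqN) 4
  have h2 : q ∣ 4 * (Nat.factorial N) - (4 * (Nat.factorial N) - 1) := Nat.dvd_sub h1 hqd
  have h3 : (4 : ℕ) * (Nat.factorial N) - (4 * (Nat.factorial N) - 1) = 1 := by omega
  rw [h3] at h2
  exact hq.one_lt.ne' (Nat.dvd_one.mp h2)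

end PrimePart

section KeyLemma

variable {H : Type} [Group H] [Finite H]

lemma key_lemma (p : ℕ) (hp : p.Prime) (hp4 : p % 4 = 3)
    (a g x : H) (ha : orderOf a = p) (hg1 : g ≠ 1)
    (hg2 : g * g = 1) (hrel : g * a * g = a⁻¹) (hx : x * x = g) :
    4 * p ^ 2 ≤ Nat.card H := by
  haveI : Fact p.Prime := ⟨hp⟩
  haveI : NeZero p := ⟨hp.ne_zero⟩
  have hpodd : p % 2 = 1 := by
    rcases hp.eq_two_or_odd with h | h
    · omega
    · exact h
  have hpZ : Prime (p : ℤ) := by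
    rw [Int.prime_iff_natAbs_prime]; simpa using hp
  have hndvd2 : ¬ ((p : ℤ) ∣ 2) := by
    intro h
    have := Int.le_of_dvd (by norm_num) h
    have := hp.two_le
    omega
  have hgg : g⁻¹ = g := inv_eq_of_mul_eq_one_right hg2
  set b := x * a * x⁻¹ with hbdef
  have hconjx : ∀ m : ℤ, x * a ^ m * x⁻¹ = b ^ m := by
    intro m; rw [hbdef]; exact conj_zpow.symm
  have hga : ∀ m : ℤ, g * a ^ m * g = a ^ (-m) := by
    intro m
    have h0 : (g * a * g⁻¹) ^ m = g * a ^ m * g⁻¹ := conj_zpow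
    rw [hgg, hrel] at h0
    rw [← h0, zpow_neg, inv_zpow]
  have hcx : g * x = x * g := by rw [← hx]; group
  have hcx' : x⁻¹ * g = g * x⁻¹ := by rw [← hx]; group
  have hxb : ∀ m : ℤ, x * b ^ m * x⁻¹ = a ^ (-m) := by
    intro m
    rw [← hconjx m]
    calc x * (x * a ^ m * x⁻¹) * x⁻¹ = (x * x) * a ^ m * (x * x)⁻¹ := by group
      _ = g * a ^ m * g := by rw [hx, hgg]
      _ = a ^ (-m) := hga m
  have hgb : ∀ m : ℤ, g * b ^ m * g = b ^ (-m) := by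
    intro m
    rw [← hconjx m, ← hconjx (-m)]
    calc g * (x * a ^ m * x⁻¹) * g = (g * x) * a ^ m * (x⁻¹ * g) := by group
      _ = (x * g) * a ^ m * (g * x⁻¹) := by rw [hcx, hcx']
      _ = x * (g * a ^ m * g) * x⁻¹ := by group
      _ = x * a ^ (-m) * x⁻¹ := by rw [hga]
  have hga' : ∀ m : ℤ, g * a ^ m = a ^ (-m) * g := by
    intro m
    calc g * a ^ m = (g * a ^ m * g) * g := by rw [mul_assoc, hg2, mul_one]
      _ = a ^ (-m) * g := by rw [hga]
  have hgb' : ∀ m : ℤ, g * b ^ m = b ^ (-m) * g := by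
    intro m
    calc g * b ^ m = (g * b ^ m * g) * g := by rw [mul_assoc, hg2, mul_one]
      _ = b ^ (-m) * g := by rw [hgb]
  have hao : ∀ m : ℤ, a ^ m = 1 ↔ (p : ℤ) ∣ m := by
    intro m; rw [← ha]; exact orderOf_dvd_iff_zpow_eq_one.symm
  have hbo : ∀ m : ℤ, b ^ m = 1 ↔ (p : ℤ) ∣ m := by
    intro m; rw [← hconjx m, conj_eq_one_iff, hao]
  have hhalfa : ∀ m : ℤ, a ^ (m + m) = 1 → a ^ m = 1 := by
    intro m hm
    rw [hao] at hm ⊢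
    rcases hpZ.dvd_mul.mp (show (p:ℤ) ∣ 2 * m by rw [two_mul]; exact hm) with h' | h'
    · exact absurd h' hndvd2
    · exact h'
  have hhalfb : ∀ m : ℤ, b ^ (m + m) = 1 → b ^ m = 1 := by
    intro m hm
    rw [hbo] at hm ⊢
    rcases hpZ.dvd_mul.mp (show (p:ℤ) ∣ 2 * m by rw [two_mul]; exact hm) with h' | h'
    · exact absurd h' hndvd2
    · exact h'
  have hmoveb : ∀ u v : ℤ, b ^ u * g * b ^ v = b ^ (u - v) * g := by
    intro u v
    calc b ^ u * g * b ^ v = b ^ u * (g * b ^ v) := by group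
      _ = b ^ u * (b ^ (-v) * g) := by rw [hgb']
      _ = b ^ (u - v) * g := by rw [show u - v = u + -v by ring, zpow_add]; group
  -- the intersection of ⟨a⟩ and ⟨b⟩ is trivial (p ≡ 3 mod 4 is used here)
  have hAB : ∀ m n : ℤ, a ^ m = b ^ n → ((p : ℤ) ∣ m ∧ (p : ℤ) ∣ n) := by
    intro m n hmn
    by_cases hn : (p : ℤ) ∣ n
    · refine ⟨?_, hn⟩
      rw [← hao, hmn, hbo]
      exact hn
    · exfalso
      have hnz : ((n : ℤ) : ZMod p) ≠ 0 := by
        rw [Ne, ZMod.intCast_zmod_eq_zero_iff_dvd]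
        exact hn
      set c : ZMod p := ((n : ℤ) : ZMod p)⁻¹ with hc
      set n' : ℤ := (c.val : ℤ) with hn'
      have hcast : ((n' : ℤ) : ZMod p) = c := by
        rw [hn']
        push_cast
        rw [ZMod.natCast_val, ZMod.cast_id]
      have hd : (p : ℤ) ∣ n * n' - 1 := by
        rw [← ZMod.intCast_zmod_eq_zero_iff_dvd]
        push_cast
        rw [hcast, hc, mul_inv_cancel₀ hnz]
        ring
      have hb1 : b = a ^ (m * n') := by
        have e1 : b ^ (n * n') = b := by
          have e0 : b ^ (n * n' - 1) = 1 := (hbo _).mpr hd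
          calc b ^ (n * n') = b ^ (n * n' - 1) * b ^ (1 : ℤ) := by
                rw [← zpow_add]; norm_num
            _ = b := by rw [e0, one_mul, zpow_one]
        calc b = b ^ (n * n') := e1.symm
          _ = (b ^ n) ^ n' := by rw [zpow_mul]
          _ = (a ^ m) ^ n' := by rw [hmn]
          _ = a ^ (m * n') := by rw [← zpow_mul]
      set t : ℤ := m * n' with ht
      have e2 : a ^ (-(1 : ℤ)) = a ^ (t * t) := by
        have e3 := hxb 1
        rw [zpow_one] at e3
        rw [hb1] at e3
        rw [hconjx t] at e3
        rw [hb1, ← zpow_mul] at e3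
        exact e3.symm
      have e4 : (p : ℤ) ∣ t * t + 1 := by
        rw [← hao]
        calc a ^ (t * t + 1) = a ^ (t * t) * a ^ (1 : ℤ) := by rw [zpow_add]
          _ = a ^ (-(1:ℤ)) * a ^ (1 : ℤ) := by rw [e2]
          _ = 1 := by rw [← zpow_add]; norm_num
      have e5 : ((t : ℤ) : ZMod p) ^ 2 = -1 := by
        have h6 : (((t * t + 1 : ℤ)) : ZMod p) = 0 := by
          rw [ZMod.intCast_zmod_eq_zero_iff_dvd]; exact e4
        push_cast at h6
        linear_combination h6
      have e6 : IsSquare (-1 : ZMod p) := ⟨((t : ℤ) : ZMod p), by rw [← e5]; ring⟩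
      exact (ZMod.exists_sq_eq_neg_one_iff.mp e6) hp4
  -- g is not of the form b^i a^j b^k
  have hg_not : ∀ i j k : ℤ, g ≠ b ^ i * a ^ j * b ^ k := by
    intro i j k h
    have e1 : a ^ j = b ^ (-i - -k) * g := by
      have e0 : b ^ (-i) * g * b ^ (-k) = a ^ j := by rw [h]; group
      rw [← e0, hmoveb]
    have e3 : a ^ (j + j) = 1 := by
      rw [zpow_add, e1]
      calc (b ^ (-i - -k) * g) * (b ^ (-i - -k) * g)
          = (b ^ (-i - -k) * (g * b ^ (-i - -k))) * g := by group
        _ = (b ^ (-i - -k) * (b ^ (-(-i - -k)) * g)) * g := by rw [hgb']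
        _ = (b ^ (-i - -k) * b ^ (-(-i - -k))) * (g * g) := by group
        _ = b ^ ((-i - -k) + -(-i - -k)) * (g * g) := by rw [← zpow_add]
        _ = 1 := by
            rw [hg2, mul_one, show (-i - -k) + -(-i - -k) = (0:ℤ) by ring, zpow_zero]
    have e4 : a ^ j = 1 := hhalfa _ e3
    have e5 : g = b ^ (-(-i - -k)) := by
      have h1 : b ^ (-i - -k) * g = 1 := by rw [← e1, e4]
      calc g = b ^ (-(-i - -k)) * (b ^ (-i - -k) * g) := by group
        _ = b ^ (-(-i - -k)) := by rw [h1, mul_one]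
    have e6 : b ^ (-(-i - -k) + -(-i - -k)) = 1 := by
      rw [zpow_add, ← e5, hg2]
    have e7 : b ^ (-(-i - -k)) = 1 := hhalfb _ e6
    exact hg1 (by rw [e5, e7])
  -- x is not of the form b^i a^j b^k
  have hx_not : ∀ i j k : ℤ, x ≠ b ^ i * a ^ j * b ^ k := by
    intro i j k h
    have hgx : g = b ^ i * a ^ j * b ^ (k + i) * a ^ j * b ^ k := by
      rw [← hx, h]; group
    have e2 : a ^ j * b ^ (k + i) * a ^ j = b ^ (-i - -k) * g := by
      have e0 : b ^ (-i) * g * b ^ (-k) = a ^ j * b ^ (k + i) * a ^ j := by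
        rw [hgx]; group
      rw [← e0, hmoveb]
    have e3 : a ^ (-j) * b ^ (-i - -k) * a ^ j = b ^ (k + i) * g := by
      calc a ^ (-j) * b ^ (-i - -k) * a ^ j
          = a ^ (-j) * (b ^ (-i - -k) * (g * g)) * a ^ j := by rw [hg2, mul_one]
        _ = a ^ (-j) * (b ^ (-i - -k) * g) * (g * a ^ j) := by group
        _ = a ^ (-j) * (a ^ j * b ^ (k + i) * a ^ j) * (g * a ^ j) := by rw [e2]
        _ = a ^ (-j) * (a ^ j * b ^ (k + i) * a ^ j) * (a ^ (-j) * g) := by rw [hga']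
        _ = b ^ (k + i) * g := by group
    have e4 : a ^ (-j) * b ^ ((-i - -k) + (-i - -k)) * a ^ j = 1 := by
      calc a ^ (-j) * b ^ ((-i - -k) + (-i - -k)) * a ^ j
          = (a ^ (-j) * b ^ (-i - -k) * a ^ j) * (a ^ (-j) * b ^ (-i - -k) * a ^ j) := by
            rw [zpow_add]; group
        _ = (b ^ (k + i) * g) * (b ^ (k + i) * g) := by rw [e3]
        _ = (b ^ (k + i) * (g * b ^ (k + i))) * g := by group
        _ = (b ^ (k + i) * (b ^ (-(k + i)) * g)) * g := by rw [hgb']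
        _ = (b ^ (k + i) * b ^ (-(k + i))) * (g * g) := by group
        _ = b ^ ((k + i) + -(k + i)) * (g * g) := by rw [← zpow_add]
        _ = 1 := by
            rw [hg2, mul_one, show (k + i) + -(k + i) = (0:ℤ) by ring, zpow_zero]
    have e5 : b ^ ((-i - -k) + (-i - -k)) = 1 := by
      have h1 : b ^ ((-i - -k) + (-i - -k))
          = a ^ j * (a ^ (-j) * b ^ ((-i - -k) + (-i - -k)) * a ^ j) * a ^ (-j) := by group
      rw [h1, e4]; group
    have e6 : b ^ (-i - -k) = 1 := hhalfb _ e5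
    have e7 : b ^ (k + i) * g = 1 := by rw [← e3, e6]; group
    have e8 : g = b ^ (-(k + i)) := by
      calc g = b ^ (-(k + i)) * (b ^ (k + i) * g) := by group
        _ = b ^ (-(k + i)) := by rw [e7, mul_one]
    have e9 : b ^ (-(k + i) + -(k + i)) = 1 := by rw [zpow_add, ← e8, hg2]
    have e10 : b ^ (-(k + i)) = 1 := hhalfb _ e9
    exact hg1 (by rw [e8, e10])
  have hxinv_not : ∀ i j k : ℤ, x⁻¹ ≠ b ^ i * a ^ j * b ^ k := by
    intro i j k h
    apply hx_not (-k) (-j) (-i)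
    calc x = (x⁻¹)⁻¹ := (inv_inv x).symm
      _ = (b ^ i * a ^ j * b ^ k)⁻¹ := by rw [h]
      _ = b ^ (-k) * a ^ (-j) * b ^ (-i) := by group
  -- powers of x
  have hx2z : x ^ (2:ℤ) = g := by
    rw [show (2:ℤ) = 1 + 1 by norm_num, zpow_add, zpow_one, hx]
  have hx4 : x ^ (4:ℤ) = 1 := by
    rw [show (4:ℤ) = 2 + 2 by norm_num, zpow_add, hx2z, hg2]
  have hxshift : ∀ m : ℤ, x ^ (m + 4) = x ^ m := by
    intro m; rw [zpow_add, hx4, mul_one]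
  have hxcases : ∀ m : ℤ, -4 < m → m < 4 → m ≠ 0 →
      x ^ m = x ∨ x ^ m = g ∨ x ^ m = x⁻¹ := by
    intro m h1 h2 h3
    interval_cases m
    · left; rw [← hxshift (-3)]; norm_num
    · right; left; rw [← hxshift (-2), show (-2:ℤ) + 4 = 2 by norm_num, hx2z]
    · right; right; rw [zpow_neg_one]
    · exact absurd rfl h3
    · left; exact zpow_one x
    · right; left; exact hx2z
    · right; right
      rw [show (3:ℤ) = -1 + 4 by norm_num, hxshift, zpow_neg_one]
  -- the injection
  set F : Fin p × Fin p × Fin 4 → H := fun q =>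
    a ^ (q.1.val : ℤ) * b ^ (q.2.1.val : ℤ) * x ^ (q.2.2.val : ℤ) with hF
  have hinj : Function.Injective F := by
    rintro ⟨i1, j1, t1⟩ ⟨i2, j2, t2⟩ heq
    simp only [hF] at heq
    have key : x ^ ((t1.val:ℤ) - (t2.val:ℤ))
        = b ^ (-(j1.val:ℤ)) * a ^ ((i2.val:ℤ) - (i1.val:ℤ)) * b ^ ((j2.val:ℤ)) := by
      calc x ^ ((t1.val:ℤ) - (t2.val:ℤ))
          = b ^ (-(j1.val:ℤ)) * a ^ (-(i1.val:ℤ))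
            * (a ^ ((i1.val:ℤ)) * b ^ ((j1.val:ℤ)) * x ^ ((t1.val:ℤ)))
            * x ^ (-(t2.val:ℤ)) := by
            rw [zpow_sub]; group
        _ = b ^ (-(j1.val:ℤ)) * a ^ (-(i1.val:ℤ))
            * (a ^ ((i2.val:ℤ)) * b ^ ((j2.val:ℤ)) * x ^ ((t2.val:ℤ)))
            * x ^ (-(t2.val:ℤ)) := by rw [heq]
        _ = b ^ (-(j1.val:ℤ)) * a ^ ((i2.val:ℤ) - (i1.val:ℤ)) * b ^ ((j2.val:ℤ)) := by
            rw [zpow_sub]; group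
    have ht : t1 = t2 := by
      by_contra hne
      have hb1 : -4 < (t1.val:ℤ) - (t2.val:ℤ) := by
        have := t1.isLt; have := t2.isLt; omega
      have hb2 : (t1.val:ℤ) - (t2.val:ℤ) < 4 := by
        have := t1.isLt; have := t2.isLt; omega
      have hb3 : (t1.val:ℤ) - (t2.val:ℤ) ≠ 0 := by
        intro h0; apply hne; apply Fin.ext; omega
      rcases hxcases _ hb1 hb2 hb3 with h | h | h
      · exact hx_not _ _ _ (by rw [← h, key])
      · exact hg_not _ _ _ (by rw [← h, key])
      · exact hxinv_not _ _ _ (by rw [← h, key])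
    subst ht
    have k2 := key
    rw [sub_self, zpow_zero] at k2
    have k3 : a ^ ((i2.val:ℤ) - (i1.val:ℤ)) = b ^ ((j1.val:ℤ) - (j2.val:ℤ)) := by
      calc a ^ ((i2.val:ℤ) - (i1.val:ℤ))
          = b ^ ((j1.val:ℤ))
            * (b ^ (-(j1.val:ℤ)) * a ^ ((i2.val:ℤ) - (i1.val:ℤ)) * b ^ ((j2.val:ℤ)))
            * b ^ (-(j2.val:ℤ)) := by group
        _ = b ^ ((j1.val:ℤ)) * 1 * b ^ (-(j2.val:ℤ)) := by rw [← k2]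
        _ = b ^ ((j1.val:ℤ) - (j2.val:ℤ)) := by rw [zpow_sub]; group
    obtain ⟨hd1, hd2⟩ := hAB _ _ k3
    have h01 : ((i2.val:ℤ)) - ((i1.val:ℤ)) = 0 := by
      refine Int.eq_zero_of_abs_lt_dvd hd1 ?_
      have := i1.isLt; have := i2.isLt
      rw [abs_lt]
      constructor <;> omega
    have h02 : ((j1.val:ℤ)) - ((j2.val:ℤ)) = 0 := by
      refine Int.eq_zero_of_abs_lt_dvd hd2 ?_
      have := j1.isLt; have := j2.isLt
      rw [abs_lt]
      constructor <;> omega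
    have hi : i1 = i2 := by apply Fin.ext; omega
    have hj : j1 = j2 := by apply Fin.ext; omega
    rw [hi, hj]
  have hcard := Nat.card_le_card_of_injective F hinj
  have hcards : Nat.card (Fin p × Fin p × Fin 4) = p * (p * 4) := by
    simp [Nat.card_eq_fintype_card]
  calc 4 * p ^ 2 = p * (p * 4) := by ring
    _ ≤ Nat.card H := by rw [← hcards]; exact hcard

end KeyLemma

open DihedralGroup

/-- There exist arbitrarily large finite groups `G` with an element `g` such that
no finite group of order less than `|G|²` contains `G` together with a square root of `g`. -/
theorem lower_bound_square_roots :
    ∀ N : ℕ, ∃ (G : Type) (_ : Group G) (_ : Finite G) (g : G),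
      N ≤ Nat.card G ∧
      ∀ (H : Type) (_ : Group H) (_ : Finite H) (f : G →* H),
        Function.Injective f → (∃ x : H, x ^ 2 = f g) →
        (Nat.card G) ^ 2 ≤ Nat.card H := by
  intro N
  obtain ⟨p, hp, hp4, hpN⟩ := exists_large_prime_three_mod_four N
  haveI : Fact p.Prime := ⟨hp⟩
  haveI : NeZero p := ⟨hp.ne_zero⟩
  have hcardG : Nat.card (DihedralGroup p) = 2 * p := by
    rw [Nat.card_eq_fintype_card, DihedralGroup.card]
  refine ⟨DihedralGroup p, inferInstance, inferInstance, sr 0, ?_, ?_⟩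
  · rw [hcardG]; omega
  · rintro H _ _ f hf ⟨x, hx⟩
    have ha : orderOf (f (r 1)) = p := by
      rw [orderOf_injective f hf, DihedralGroup.orderOf_r_one]
    have hg1 : f (sr 0) ≠ 1 := by
      intro h
      have := hf (h.trans (map_one f).symm)
      simp [-DihedralGroup.r_zero, DihedralGroup.one_def] at this
    have hg2 : f (sr 0) * f (sr 0) = 1 := by
      rw [← map_mul, DihedralGroup.sr_mul_sr]
      norm_num [← DihedralGroup.one_def, map_one]
    have hrel : f (sr 0) * f (r 1) * f (sr 0) = (f (r 1))⁻¹ := by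
      rw [← map_mul, ← map_mul, ← map_inv]
      congr 1
      rw [DihedralGroup.sr_mul_r, DihedralGroup.sr_mul_sr]
      show r (0 - (0 + 1)) = (r 1)⁻¹
      have h9 : ((r 1)⁻¹ : DihedralGroup p) = r (-1) := rfl
      rw [h9]
      congr 1
      ring
    have hx2 : x * x = f (sr 0) := by rw [← pow_two, hx]
    have hkey := key_lemma p hp hp4 (f (r 1)) (f (sr 0)) x ha hg1 hg2 hrel hx2
    rw [hcardG]
    calc (2 * p) ^ 2 = 4 * p ^ 2 := by ring
      _ ≤ Nat.card H := hkey
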